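/- Let (P,R,f) be a DPS instance with R nonempty, let F = max over e ∈ R of f(e), and define g : R → ℝ by g(e) = 1/f(e). Then: (i) if the DPS instance (P,R,f) admits a valid schedule, then the OPS instance (P,R,g) admits a valid schedule of heat at most 1; and (ii) if the DPS instance (P,R,f) admits no valid schedule, then every valid schedule for the OPS instance (P,R,g) has heat at least (F+1)/F. -/
import Mathlib


open scoped ENNReal BigOperators

namespace PolySched

variable {V : Type*}

/-- A set of edges is a matching in `G`: all edges belong to `G` and no two
distinct edges share an endpoint. -/
def IsMatchingIn (G : SimpleGraph V) (M : Set (Sym2 V)) : Prop :=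
  M ⊆ G.edgeSet ∧ M.Pairwise fun e e' => ∀ v, v ∈ e → v ∉ e'

/-- A schedule is valid for the OPS instance on `G` if each day is a matching. -/
def OPSValid (G : SimpleGraph V) (S : ℕ → Set (Sym2 V)) : Prop :=
  ∀ t, IsMatchingIn G (S t)

/-- A schedule is valid for the DPS instance `(G, f)`. -/
def DPSValid (G : SimpleGraph V) (f : Sym2 V → ℕ) (S : ℕ → Set (Sym2 V)) : Prop :=
  OPSValid G S ∧ ∀ e ∈ G.edgeSet, ∀ t : ℕ, ∃ i < f e, e ∈ S (t + i)

/-- Recurrence time of edge `e` under schedule `S`: the supremum of `d+1` over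
all `d` such that some window of `d` consecutive days misses `e`. -/
noncomputable def recTime (S : ℕ → Set (Sym2 V)) (e : Sym2 V) : ℝ≥0∞ :=
  ⨆ d ∈ {d : ℕ | ∃ t : ℕ, ∀ i < d, e ∉ S (t + i)}, ((d : ℝ≥0∞) + 1)

/-- Heat of a schedule for the OPS instance `(G, g)`. -/
noncomputable def heat (G : SimpleGraph V) (g : Sym2 V → ℝ) (S : ℕ → Set (Sym2 V)) : ℝ≥0∞ :=
  ⨆ e ∈ G.edgeSet, ENNReal.ofReal (g e) * recTime S e
/-- DPS-to-OPS conversion (Lemma "DPS to OPS").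
With growth rates `g e = 1 / f e` and `F` the maximum frequency:
(i) if the DPS instance is feasible, the OPS instance has a schedule of heat ≤ 1;
(ii) if it is infeasible, every valid OPS schedule has heat ≥ (F+1)/F. -/
theorem dps_to_ops {V : Type*} (G : SimpleGraph V)
    (f : Sym2 V → ℕ) (hf : ∀ e ∈ G.edgeSet, 0 < f e)
    (hne : G.edgeSet.Nonempty)
    (F : ℕ) (hF : IsGreatest (f '' G.edgeSet) F)
    (g : Sym2 V → ℝ) (hg : ∀ e ∈ G.edgeSet, g e = 1 / (f e : ℝ)) :
    ((∃ S, DPSValid G f S) → ∃ S, OPSValid G S ∧ heat G g S ≤ 1) ∧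
    ((¬ ∃ S, DPSValid G f S) → ∀ S, OPSValid G S →
        ENNReal.ofReal (((F : ℝ) + 1) / F) ≤ heat G g S) := by
  constructor
  · rintro ⟨S, hOPS, hDPS⟩
    refine ⟨S, hOPS, ?_⟩
    refine iSup₂_le fun e he => ?_
    have hfe : 0 < f e := hf e he
    have hrec : recTime S e ≤ (f e : ℝ≥0∞) := by
      refine iSup₂_le fun d hd => ?_
      obtain ⟨t, ht⟩ := hd
      obtain ⟨i, hi, hmem⟩ := hDPS e he t
      have : d + 1 ≤ f e := by
        by_contra h
        exact ht i (lt_of_lt_of_le hi (Nat.le_of_lt_succ (lt_of_not_ge h))) hmem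
      calc (d : ℝ≥0∞) + 1 = ((d + 1 : ℕ) : ℝ≥0∞) := by push_cast; ring
        _ ≤ (f e : ℝ≥0∞) := by exact_mod_cast this
    have hge : ENNReal.ofReal (g e) = ((f e : ℝ≥0∞))⁻¹ := by
      rw [hg e he, one_div, ENNReal.ofReal_inv_of_pos (by exact_mod_cast hfe),
        ENNReal.ofReal_natCast]
    calc ENNReal.ofReal (g e) * recTime S e
        ≤ ((f e : ℝ≥0∞))⁻¹ * (f e : ℝ≥0∞) := by rw [hge]; exact mul_le_mul_right hrec _
      _ = 1 := ENNReal.inv_mul_cancel (by exact_mod_cast hfe.ne') (by simp)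
  · intro hinf S hOPS
    have hnot : ¬ DPSValid G f S := fun h => hinf ⟨S, h⟩
    simp only [DPSValid, hOPS, true_and, not_forall] at hnot
    obtain ⟨e, he, t, ht⟩ := hnot
    push_neg at ht
    have hfe : 0 < f e := hf e he
    obtain ⟨e0, he0, hfe0⟩ := hF.1
    have hFpos : 0 < F := hfe0 ▸ hf e0 he0
    have hfeF : f e ≤ F := hF.2 ⟨e, he, rfl⟩
    have hmem : (f e) ∈ {d : ℕ | ∃ t : ℕ, ∀ i < d, e ∉ S (t + i)} := ⟨t, ht⟩
    have hrec : ((f e : ℝ≥0∞) + 1) ≤ recTime S e := le_iSup₂_of_le (f e) hmem le_rfl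
    have key : ENNReal.ofReal (((F : ℝ) + 1) / F) ≤ ENNReal.ofReal (g e) * ((f e : ℝ≥0∞) + 1) := by
      have h1 : ((f e : ℝ≥0∞) + 1) = ENNReal.ofReal ((f e : ℝ) + 1) := by
        rw [ENNReal.ofReal_add (by positivity) zero_le_one]; simp
      rw [h1, ← ENNReal.ofReal_mul (by rw [hg e he]; positivity)]
      apply ENNReal.ofReal_le_ofReal
      rw [hg e he, one_div, inv_mul_eq_div, div_le_div_iff₀ (by exact_mod_cast hFpos)
        (by exact_mod_cast hfe)]
      have h2 : (f e : ℝ) ≤ F := by exact_mod_cast hfeF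
      nlinarith
    calc ENNReal.ofReal (((F : ℝ) + 1) / F)
        ≤ ENNReal.ofReal (g e) * ((f e : ℝ≥0∞) + 1) := key
      _ ≤ ENNReal.ofReal (g e) * recTime S e := mul_le_mul_right hrec _
      _ ≤ heat G g S := le_iSup₂_of_le e he le_rfl

end PolySched
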